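/- Let $\Omega \subset \mathbb{R}^N$ be open, $J \ge 0$ measurable and symmetric with $\mathcal{E}_J$ well-defined, and let $u \in \mathcal{V}^J(\Omega)$ satisfy $u \ge 0$ on $\mathbb{R}^N \setminus \Omega$. Then $u^- \in \mathcal{D}^J(\Omega)$ and $\mathcal{E}_J(u^-, u^-) \le -\mathcal{E}_J(u, u^-)$. -/
import Mathlib


open MeasureTheory Set

noncomputable section

variable {N : ℕ}

lemma negPart_key (a b : ℝ) :
    (-min a 0 - -min b 0) ^ 2 + (a - b) * (-min a 0 - -min b 0) ≤ 0 := by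
  rcases le_total a 0 with ha | ha <;> rcases le_total b 0 with hb | hb <;>
    simp only [min_eq_left, min_eq_right, ha, hb, min_eq_left ha, min_eq_right ha,
      min_eq_left hb, min_eq_right hb] <;> nlinarith

lemma negPart_sq_le (a b : ℝ) :
    (-min a 0 - -min b 0) ^ 2 ≤ (a - b) ^ 2 := by
  rcases le_total a 0 with ha | ha <;> rcases le_total b 0 with hb | hb <;>
    simp only [min_eq_left ha, min_eq_right ha, min_eq_left hb, min_eq_right hb] <;> nlinarith

/-- The signed bilinear form `ℰ_J(v,w) = ½ ∫∫ (v(x)-v(y))(w(x)-w(y)) J(x,y) dx dy`. -/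
def bilinForm (J : EuclideanSpace ℝ (Fin N) → EuclideanSpace ℝ (Fin N) → ℝ)
    (v w : EuclideanSpace ℝ (Fin N) → ℝ) : ℝ :=
  (1 / 2) * ∫ p : EuclideanSpace ℝ (Fin N) × EuclideanSpace ℝ (Fin N),
    (v p.1 - v p.2) * (w p.1 - w p.2) * J p.1 p.2

/-- Lemma: if `u ∈ 𝒱^J(Ω)` satisfies `u ≥ 0` on `ℝ^N ∖ Ω`, then the negative part
`u⁻ = -min(u,0)` lies in `𝒟^J(Ω)` and `ℰ_J(u⁻,u⁻) ≤ -ℰ_J(u,u⁻)`, the right-hand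
side being well-defined. -/
theorem negPart_energy_estimate
    (J : EuclideanSpace ℝ (Fin N) → EuclideanSpace ℝ (Fin N) → ℝ)
    (hJpos : ∀ x y, 0 ≤ J x y) (hJsym : ∀ x y, J x y = J y x)
    (hJmeas : Measurable fun p : EuclideanSpace ℝ (Fin N) × EuclideanSpace ℝ (Fin N) => J p.1 p.2)
    (Ω : Set (EuclideanSpace ℝ (Fin N))) (hΩ : IsOpen Ω)
    (u : EuclideanSpace ℝ (Fin N) → ℝ) (hu : Measurable u)
    -- `u ∈ 𝒱^J(Ω)`, i.e. `ρ(u,Ω) < ∞`: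
    (huρ : IntegrableOn
      (fun p : EuclideanSpace ℝ (Fin N) × EuclideanSpace ℝ (Fin N) =>
        (u p.1 - u p.2) ^ 2 * J p.1 p.2) (Ω ×ˢ univ))
    -- `u ≥ 0` on `ℝ^N ∖ Ω`:
    (hu0 : ∀ x ∉ Ω, 0 ≤ u x) :
    -- `u⁻ ∈ 𝒟^J(Ω)`:
    ((∀ x ∉ Ω, -min (u x) 0 = 0) ∧
      Integrable (fun p : EuclideanSpace ℝ (Fin N) × EuclideanSpace ℝ (Fin N) =>
        (-min (u p.1) 0 - -min (u p.2) 0) ^ 2 * J p.1 p.2)) ∧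
    -- `ℰ_J(u,u⁻)` is well-defined:
    Integrable (fun p : EuclideanSpace ℝ (Fin N) × EuclideanSpace ℝ (Fin N) =>
      (u p.1 - u p.2) * (-min (u p.1) 0 - -min (u p.2) 0) * J p.1 p.2) ∧
    bilinForm J (fun x => -min (u x) 0) (fun x => -min (u x) 0)
      ≤ -bilinForm J u (fun x => -min (u x) 0) := by
  classical
  let E := EuclideanSpace ℝ (Fin N)
  set v : E → ℝ := fun x => -min (u x) 0 with hv_def
  have hv : Measurable v := by
    have : Measurable fun x => min (u x) 0 := hu.min measurable_const
    exact this.neg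
  set f : E × E → ℝ := fun p => (u p.1 - u p.2) * (v p.1 - v p.2) * J p.1 p.2 with hf_def
  set h : E × E → ℝ := fun p => (v p.1 - v p.2) ^ 2 * J p.1 p.2 with hh_def
  set g : E × E → ℝ := fun p => (u p.1 - u p.2) ^ 2 * J p.1 p.2 with hg_def
  have hfm : Measurable f :=
    (((hu.comp measurable_fst).sub (hu.comp measurable_snd)).mul
      ((hv.comp measurable_fst).sub (hv.comp measurable_snd))).mul hJmeas
  have hhm : Measurable h :=
    (((hv.comp measurable_fst).sub (hv.comp measurable_snd)).pow_const 2).mul hJmeas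
  -- v vanishes outside Ω
  have hv0 : ∀ x ∉ Ω, v x = 0 := by
    intro x hx
    simp [hv_def, min_eq_right (hu0 x hx)]
  -- pointwise bounds
  have habs : ∀ p : E × E, |f p| ≤ g p := by
    intro p
    have h1 : |v p.1 - v p.2| ≤ |u p.1 - u p.2| := by
      rw [← sq_le_sq]; exact negPart_sq_le _ _
    calc |f p| = |u p.1 - u p.2| * |v p.1 - v p.2| * J p.1 p.2 := by
          rw [hf_def]; rw [abs_mul, abs_mul, abs_of_nonneg (hJpos _ _)]
      _ ≤ |u p.1 - u p.2| * |u p.1 - u p.2| * J p.1 p.2 := by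
          apply mul_le_mul_of_nonneg_right _ (hJpos _ _)
          exact mul_le_mul_of_nonneg_left h1 (abs_nonneg _)
      _ = g p := by rw [hg_def]; rw [← abs_mul, ← sq, abs_of_nonneg (sq_nonneg _)]
  have hhf : ∀ p : E × E, h p + f p ≤ 0 := by
    intro p
    have := negPart_key (u p.1) (u p.2)
    have : (v p.1 - v p.2) ^ 2 + (u p.1 - u p.2) * (v p.1 - v p.2) ≤ 0 := this
    calc h p + f p = ((v p.1 - v p.2) ^ 2 + (u p.1 - u p.2) * (v p.1 - v p.2)) * J p.1 p.2 := by
          simp only [hh_def, hf_def]; ring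
      _ ≤ 0 := mul_nonpos_of_nonpos_of_nonneg this (hJpos _ _)
  have hh0 : ∀ p : E × E, 0 ≤ h p :=
    fun p => mul_nonneg (sq_nonneg _) (hJpos _ _)
  -- decomposition of the space
  have hΩm : MeasurableSet Ω := hΩ.measurableSet
  have hS1 : MeasurableSet (Ω ×ˢ (univ : Set E)) := hΩm.prod MeasurableSet.univ
  have hS2 : MeasurableSet (Ωᶜ ×ˢ Ω) := hΩm.compl.prod hΩm
  have hS3 : MeasurableSet (Ωᶜ ×ˢ Ωᶜ) := hΩm.compl.prod hΩm.compl
  have hcover : (univ : Set (E × E)) = Ω ×ˢ univ ∪ (Ωᶜ ×ˢ Ω ∪ Ωᶜ ×ˢ Ωᶜ) := by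
    ext p
    by_cases h1 : p.1 ∈ Ω <;> by_cases h2 : p.2 ∈ Ω <;> simp [h1, h2]
  -- integrability of f on the three pieces
  have hfS1 : IntegrableOn f (Ω ×ˢ univ) := by
    refine huρ.mono' (hfm.aestronglyMeasurable.restrict) ?_
    exact Filter.Eventually.of_forall fun p => habs p
  have hswap : MeasurePreserving (Prod.swap : E × E → E × E) volume volume := by
    rw [Measure.volume_eq_prod]; exact Measure.measurePreserving_swap
  have hfswap : (f ∘ Prod.swap) = f := by
    funext p
    simp only [hf_def, Function.comp_apply, Prod.fst_swap, Prod.snd_swap]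
    rw [hJsym p.2 p.1]; ring
  have hfS2 : IntegrableOn f (Ωᶜ ×ˢ Ω) := by
    have hpre : (Prod.swap : E × E → E × E) ⁻¹' (Ωᶜ ×ˢ Ω) = Ω ×ˢ Ωᶜ := by
      ext p; simp [Set.mem_prod, and_comm]
    have := (hswap.integrableOn_comp_preimage
      (MeasurableEquiv.prodComm (α := E) (β := E)).measurableEmbedding
      (f := f) (s := Ωᶜ ×ˢ Ω))
    rw [← this, hpre, hfswap]
    exact hfS1.mono_set (prod_mono_right (subset_univ _))
  have hfS3 : IntegrableOn f (Ωᶜ ×ˢ Ωᶜ) := by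
    refine (integrable_zero _ _ _).integrableOn.congr_fun ?_ hS3
    intro p hp
    simp only [mem_prod, mem_compl_iff] at hp
    simp [hf_def, hv0 _ hp.1, hv0 _ hp.2]
  have hfInt : Integrable f := by
    rw [← integrableOn_univ, hcover]
    exact hfS1.union (hfS2.union hfS3)
  -- integrability of h by domination by |f|
  have hhInt : Integrable h := by
    refine hfInt.abs.mono' hhm.aestronglyMeasurable ?_
    refine Filter.Eventually.of_forall fun p => ?_
    rw [Real.norm_eq_abs, abs_of_nonneg (hh0 p)]
    have := hhf p
    have := hh0 p
    have := neg_abs_le (f p)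
    linarith [le_abs_self (f p), neg_abs_le (f p)]
  refine ⟨⟨hv0, hhInt⟩, hfInt, ?_⟩
  -- the energy inequality
  have hint : ∫ p : E × E, h p ≤ ∫ p : E × E, (-(f p)) := by
    refine integral_mono hhInt hfInt.neg fun p => ?_
    have := hhf p; simp only [Pi.neg_apply]; linarith
  rw [integral_neg] at hint
  simp only [bilinForm]
  have heq1 : (∫ p : E × E, (v p.1 - v p.2) * (v p.1 - v p.2) * J p.1 p.2) = ∫ p : E × E, h p := by
    congr 1; funext p; simp only [hh_def]; ring
  have heq2 : (∫ p : E × E, (u p.1 - u p.2) * (v p.1 - v p.2) * J p.1 p.2) = ∫ p : E × E, f p := by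
    rfl
  rw [heq1, heq2]
  linarith
end
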